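/- Suppose F = {X ∈ S^n_+ : A(X) = b} is nonempty and bounded. Then for every α > 0 there exists a unique X(α) ∈ F(α) ∩ S^n_{++} maximizing log det(X) over F(α) := {X ∈ S^n_+ : A(X) = b + α A(I)}, where I is the identity. -/

import Mathlib

open Matrix

namespace Stmt6Aux
variable {n : ℕ}


lemma quad_eval (Z : Matrix (Fin n) (Fin n) ℝ) (i j : Fin n) (a b : ℝ) :
    (a • (Pi.single i 1 : Fin n → ℝ) + b • (Pi.single j 1 : Fin n → ℝ)) ⬝ᵥ
      Z *ᵥ (a • (Pi.single i 1 : Fin n → ℝ) + b • (Pi.single j 1 : Fin n → ℝ))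
      = a^2 * Z i i + a * b * Z i j + a * b * Z j i + b^2 * Z j j := by
  simp [add_dotProduct, dotProduct_add, smul_dotProduct, dotProduct_smul, mulVec_add, mulVec_smul,
    mulVec_single, single_dotProduct, dotProduct_single]
  ring

lemma psd_quad {Z : Matrix (Fin n) (Fin n) ℝ} (hZ : Z.PosSemidef) (x : Fin n → ℝ) :
    0 ≤ x ⬝ᵥ Z *ᵥ x := by simpa using hZ.dotProduct_mulVec_nonneg x

lemma psd_diag_nonneg {Z : Matrix (Fin n) (Fin n) ℝ} (hZ : Z.PosSemidef) (i : Fin n) :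
    0 ≤ Z i i := by
  have := hZ.dotProduct_mulVec_nonneg (Pi.single i 1)
  simpa [single_dotProduct, mulVec_single] using this

lemma psd_trace_nonneg {Z : Matrix (Fin n) (Fin n) ℝ} (hZ : Z.PosSemidef) : 0 ≤ Z.trace := by
  exact Finset.sum_nonneg fun i _ => psd_diag_nonneg hZ i

lemma psd_diag_le_trace {Z : Matrix (Fin n) (Fin n) ℝ} (hZ : Z.PosSemidef) (i : Fin n) :
    Z i i ≤ Z.trace := by
  exact Finset.single_le_sum (fun k _ => psd_diag_nonneg hZ k) (Finset.mem_univ i)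

lemma psd_sq_le {Z : Matrix (Fin n) (Fin n) ℝ} (hZ : Z.PosSemidef) (i j : Fin n) :
    Z i j ^ 2 ≤ Z i i * Z j j := by
  rcases eq_or_ne i j with rfl | hij
  · nlinarith [psd_diag_nonneg hZ i]
  have hsym : Z j i = Z i j := by
    have := congrFun (congrFun hZ.1 i) j
    simpa [conjTranspose_apply] using this
  have hq : ∀ a b : ℝ, 0 ≤ a^2 * Z i i + a * b * Z i j + a * b * Z j i + b^2 * Z j j := by
    intro a b
    have := psd_quad hZ (a • (Pi.single i 1 : Fin n → ℝ) + b • (Pi.single j 1 : Fin n → ℝ))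
    rwa [quad_eval] at this
  by_cases hjj : Z j j = 0
  · have key := hq (Z i j) (-(Z i i + 1))
    rw [hsym, hjj] at key
    have hd := psd_diag_nonneg hZ i
    rw [hjj]
    nlinarith [key, hd, sq_nonneg (Z i j)]
  · have hjj' : 0 < Z j j := lt_of_le_of_ne (psd_diag_nonneg hZ j) (Ne.symm hjj)
    have key := hq (Z j j) (-(Z i j))
    rw [hsym] at key
    nlinarith [key, hjj']

lemma psd_abs_le_trace {Z : Matrix (Fin n) (Fin n) ℝ} (hZ : Z.PosSemidef) (i j : Fin n) :
    |Z i j| ≤ Z.trace := by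
  have h1 := psd_sq_le hZ i j
  have h2 := psd_diag_le_trace hZ i
  have h3 := psd_diag_le_trace hZ j
  have h4 := psd_diag_nonneg hZ i
  have h5 := psd_diag_nonneg hZ j
  have htr := psd_trace_nonneg hZ
  nlinarith [abs_nonneg (Z i j), sq_abs (Z i j)]

lemma psd_eq_zero_of_trace_eq_zero {Z : Matrix (Fin n) (Fin n) ℝ} (hZ : Z.PosSemidef)
    (h : Z.trace = 0) : Z = 0 := by
  ext i j
  have := psd_abs_le_trace hZ i j
  rw [h] at this
  simpa using abs_nonpos_iff.mp this

lemma psd_smul {Z : Matrix (Fin n) (Fin n) ℝ} (hZ : Z.PosSemidef) {t : ℝ} (ht : 0 ≤ t) :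
    (t • Z).PosSemidef := by
  refine posSemidef_iff_dotProduct_mulVec.mpr ⟨?_, ?_⟩
  · unfold Matrix.IsHermitian
    rw [conjTranspose_smul, hZ.1]
    simp
  · intro x
    rw [smul_mulVec, dotProduct_smul]
    simpa using mul_nonneg ht (psd_quad hZ x)



lemma isClosed_psd : IsClosed {X : Matrix (Fin n) (Fin n) ℝ | X.PosSemidef} := by
  have : {X : Matrix (Fin n) (Fin n) ℝ | X.PosSemidef}
      = {X : Matrix (Fin n) (Fin n) ℝ | Xᴴ = X} ∩
        ⋂ x : Fin n → ℝ, {X : Matrix (Fin n) (Fin n) ℝ | 0 ≤ star x ⬝ᵥ X *ᵥ x} := by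
    ext X
    simp only [Set.mem_setOf_eq, Set.mem_inter_iff, Set.mem_iInter]
    exact ⟨fun h => ⟨h.1, (posSemidef_iff_dotProduct_mulVec.mp h).2⟩,
      fun h => posSemidef_iff_dotProduct_mulVec.mpr ⟨h.1, h.2⟩⟩
  rw [this]
  refine IsClosed.inter (isClosed_eq (continuous_id.matrix_conjTranspose) continuous_id) ?_
  refine isClosed_iInter fun x => ?_
  exact isClosed_le continuous_const (Continuous.dotProduct continuous_const
    (continuous_id.matrix_mulVec continuous_const))

lemma isClosed_constraint (S : Matrix (Fin n) (Fin n) ℝ) (c : ℝ) :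
    IsClosed {X : Matrix (Fin n) (Fin n) ℝ | (S * X).trace = c} :=
  isClosed_eq ((continuous_const.matrix_mul continuous_id).matrix_trace) continuous_const

lemma isCompact_of_bounded_closed {T : Set (Matrix (Fin n) (Fin n) ℝ)} (hT : IsClosed T)
    {c : ℝ} (hb : ∀ X ∈ T, ∀ i j, |X i j| ≤ c) : IsCompact T := by
  have h1 : IsCompact ((Set.univ : Set (Fin n)).pi fun _ =>
      (Set.univ : Set (Fin n)).pi fun _ => Set.Icc (-c) c) :=
    isCompact_univ_pi fun _ => isCompact_univ_pi fun _ => isCompact_Icc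
  have hg : Continuous (Matrix.of : (Fin n → Fin n → ℝ) → Matrix (Fin n) (Fin n) ℝ) :=
    continuous_id
  refine IsCompact.of_isClosed_subset (h1.image hg) hT ?_
  intro X hX
  refine ⟨fun i j => X i j, ?_, rfl⟩
  simp only [Set.mem_pi, Set.mem_univ, forall_true_left, Set.mem_Icc]
  intro i j
  exact abs_le.mp (hb X hX i j)



lemma posdef_conj {E Y : Matrix (Fin n) (Fin n) ℝ} (hY : Y.PosDef) (hE : IsUnit E) :
    (Eᴴ * Y * E).PosDef := by
  refine posDef_iff_dotProduct_mulVec.mpr ⟨?_, ?_⟩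
  · exact isHermitian_conjTranspose_mul_mul E hY.1
  · intro x hx
    have hEx : E *ᵥ x ≠ 0 := by
      intro h
      apply hx
      have hinj : Function.Injective E.mulVec := mulVec_injective_iff_isUnit.mpr hE
      have : E *ᵥ x = E *ᵥ 0 := by simpa using h
      exact hinj this
    have := hY.dotProduct_mulVec_pos hEx
    simpa only [star_mulVec, dotProduct_mulVec, vecMul_vecMul, Matrix.mul_assoc] using this

lemma unique_max {X Y : Matrix (Fin n) (Fin n) ℝ} (hX : X.PosDef) (hY : Y.PosDef)
    (hdet : X.det = Y.det) (hmid : ((1/2 : ℝ) • (X + Y)).det ≤ X.det) : Y = X := by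
  classical
  open scoped MatrixOrder in set C := CFC.sqrt X with hCdef
  have hC2 : C * C = X := by
    open scoped MatrixOrder in exact CFC.sqrt_mul_sqrt_self X hX.posSemidef.nonneg
  have hCpsd : C.PosSemidef := by
    open scoped MatrixOrder in exact (CFC.sqrt_nonneg X).posSemidef
  have hdetC : C.det * C.det = X.det := by rw [← det_mul, hC2]
  have hXdet : 0 < X.det := hX.det_pos
  have hCdet : IsUnit C.det := by
    refine isUnit_iff_ne_zero.mpr fun h => ?_
    rw [h, mul_zero] at hdetC
    exact absurd hdetC.symm (ne_of_gt hXdet)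
  have hCunit : IsUnit C := (isUnit_iff_isUnit_det C).mpr hCdet
  have hEunit : IsUnit C⁻¹ := isUnit_nonsing_inv_iff.mpr hCunit
  have hEherm : (C⁻¹)ᴴ = C⁻¹ := by rw [conjTranspose_nonsing_inv, hCpsd.1]
  set B := C⁻¹ * Y * C⁻¹ with hBdef
  have hB : B.PosDef := by
    have := posdef_conj hY hEunit
    rwa [hEherm] at this
  have h1 : C * C⁻¹ = 1 := mul_nonsing_inv C hCdet
  have h2 : C⁻¹ * C = 1 := nonsing_inv_mul C hCdet
  have hCB : C * B * C = Y := by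
    rw [hBdef]
    calc C * (C⁻¹ * Y * C⁻¹) * C
        = (C * C⁻¹) * Y * (C⁻¹ * C) := by simp only [Matrix.mul_assoc]
      _ = Y := by rw [h1, h2, Matrix.one_mul, Matrix.mul_one]
  have hXY : C * (1 + B) * C = X + Y := by
    rw [Matrix.mul_add, Matrix.add_mul, Matrix.mul_one, hC2, hCB]
  -- spectral data of B
  have hBh : B.IsHermitian := hB.1
  set ev := hBh.eigenvalues with hev
  have hpos : ∀ i, 0 < ev i := fun i => hB.eigenvalues_pos i
  set U : Matrix (Fin n) (Fin n) ℝ := ↑(hBh.eigenvectorUnitary) with hU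
  have hUU : U * star U = 1 := mem_unitaryGroup_iff.mp (hBh.eigenvectorUnitary).2
  have hspec : B = U * diagonal ev * star U := by
    have := hBh.spectral_theorem
    simpa [RCLike.ofReal_real_eq_id] using this
  have hdetU : U.det * (star U).det = 1 := by
    rw [← det_mul, hUU, det_one]
  have h1B : 1 + B = U * (1 + diagonal ev) * star U := by
    rw [Matrix.mul_add, Matrix.add_mul, Matrix.mul_one, hUU, ← hspec]
  have hdet1B : (1 + B).det = ∏ i, (1 + ev i) := by
    rw [h1B, det_mul, det_mul]
    have : U.det * (1 + diagonal ev).det * (star U).det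
        = (1 + diagonal ev).det * (U.det * (star U).det) := by ring
    rw [this, hdetU, mul_one, ← diagonal_one, diagonal_add, det_diagonal]
  have hdetB : B.det = ∏ i, ev i := by
    have := hBh.det_eq_prod_eigenvalues
    simpa [RCLike.ofReal_real_eq_id] using this
  have hYB : Y.det = X.det * B.det := by
    rw [← hCB, det_mul, det_mul]
    rw [← hdetC]; ring
  have hprod1 : ∏ i, ev i = 1 := by
    have : X.det * (∏ i, ev i) = X.det * 1 := by
      rw [mul_one, ← hdetB, ← hYB, hdet]
    exact mul_left_cancel₀ (ne_of_gt hXdet) this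
  -- the determinant of the midpoint
  have hmidcalc : ((1/2 : ℝ) • (X + Y)).det = X.det * ∏ i, ((1 + ev i)/2) := by
    rw [det_smul, ← hXY, det_mul, det_mul]
    have hc : (1/2 : ℝ) ^ Fintype.card (Fin n) = ∏ _i : Fin n, (1/2 : ℝ) := by
      simp [Finset.prod_const]
    have : C.det * (1 + B).det * C.det = X.det * (1 + B).det := by rw [← hdetC]; ring
    rw [this, hdet1B, hc]
    have hcomb : (∏ _i : Fin n, (1/2:ℝ)) * ∏ i, (1 + ev i) = ∏ i, ((1 + ev i)/2) := by
      rw [← Finset.prod_mul_distrib]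
      exact Finset.prod_congr rfl fun i _ => by ring
    rw [← hcomb]
    ring
  have hple : ∏ i, ((1 + ev i)/2) ≤ 1 := by
    rw [hmidcalc] at hmid
    nlinarith [hmid, hXdet]
  -- geometric mean
  have hsq : (∏ i, Real.sqrt (ev i)) ^ 2 = 1 := by
    rw [← Finset.prod_pow]
    have : ∀ i ∈ Finset.univ, Real.sqrt (ev i) ^ 2 = ev i := fun i _ =>
      Real.sq_sqrt (le_of_lt (hpos i))
    rw [Finset.prod_congr rfl this, hprod1]
  have hsnn : 0 ≤ ∏ i, Real.sqrt (ev i) :=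
    Finset.prod_nonneg fun i _ => Real.sqrt_nonneg _
  have hgeom : ∏ i, Real.sqrt (ev i) = 1 := by nlinarith [hsq, hsnn]
  have hpt : ∀ i : Fin n, Real.sqrt (ev i) ≤ (1 + ev i)/2 := fun i => by
    nlinarith [Real.sq_sqrt (le_of_lt (hpos i)), Real.sqrt_nonneg (ev i),
      sq_nonneg (Real.sqrt (ev i) - 1)]
  have hall : ∀ i, ev i = 1 := by
    by_contra hne
    push_neg at hne
    obtain ⟨k, hk⟩ := hne
    have hklt : Real.sqrt (ev k) < (1 + ev k)/2 := by
      have hs : Real.sqrt (ev k) ≠ 1 := fun h => hk (by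
        have := Real.sq_sqrt (le_of_lt (hpos k))
        rw [h] at this; simpa using this.symm)
      have h0 : (Real.sqrt (ev k) - 1)^2 ≠ 0 := pow_ne_zero _ (sub_ne_zero.mpr hs)
      have hpos2 : 0 < (Real.sqrt (ev k) - 1)^2 := lt_of_le_of_ne (sq_nonneg _) (Ne.symm h0)
      nlinarith [Real.sq_sqrt (le_of_lt (hpos k)), Real.sqrt_nonneg (ev k), hpos2]
    have : ∏ i, Real.sqrt (ev i) < ∏ i, ((1 + ev i)/2) :=
      Finset.prod_lt_prod (fun i _ => Real.sqrt_pos.mpr (hpos i)) (fun i _ => hpt i)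
        ⟨k, Finset.mem_univ k, hklt⟩
    rw [hgeom] at this
    linarith
  have hBone : B = 1 := by
    rw [hspec]
    have : diagonal ev = 1 := by
      rw [show ev = fun _ => (1:ℝ) from funext hall]
      exact diagonal_one
    rw [this, Matrix.mul_one, hUU]
  rw [← hCB, hBone, Matrix.mul_one, hC2]


lemma posdef_of_det_pos {Z : Matrix (Fin n) (Fin n) ℝ} (hZ : Z.PosSemidef) (h : 0 < Z.det) :
    Z.PosDef := by
  classical
  have hZh : Z.IsHermitian := hZ.1
  have hev : ∀ i, 0 ≤ hZh.eigenvalues i := hZ.eigenvalues_nonneg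
  have hdet : Z.det = ∏ i, hZh.eigenvalues i := by
    simpa [RCLike.ofReal_real_eq_id] using hZh.det_eq_prod_eigenvalues
  have hpos : ∀ i, 0 < hZh.eigenvalues i := by
    intro i
    rcases lt_or_eq_of_le (hev i) with h' | h'
    · exact h'
    · exfalso
      rw [hdet, Finset.prod_eq_zero (Finset.mem_univ i) h'.symm] at h
      exact lt_irrefl 0 h
  have hD : (diagonal hZh.eigenvalues).PosDef := posDef_diagonal_iff.mpr hpos
  set U : Matrix (Fin n) (Fin n) ℝ := ↑(hZh.eigenvectorUnitary) with hUdef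
  have hspec : Z = U * diagonal hZh.eigenvalues * star U := by
    simpa [RCLike.ofReal_real_eq_id] using hZh.spectral_theorem
  have hUunit : IsUnit (star U) := by
    have h1 : star U * U = 1 := mem_unitaryGroup_iff'.mp hZh.eigenvectorUnitary.2
    have : IsUnit ((star U).det) := IsUnit.of_mul_eq_one U.det (by
      rw [← det_mul, h1, det_one])
    exact (isUnit_iff_isUnit_det _).mpr this
  have hcong := posdef_conj hD hUunit
  rw [star_eq_conjTranspose, conjTranspose_conjTranspose, ← star_eq_conjTranspose,
    ← hspec] at hcong
  exact hcong

end Stmt6Aux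

open Stmt6Aux

theorem stmt6 {n m : ℕ} (S : Fin m → Matrix (Fin n) (Fin n) ℝ)
    (hS : ∀ i, (S i).IsSymm) (b : Fin m → ℝ)
    (hsurj : Function.Surjective
      (fun X : Matrix (Fin n) (Fin n) ℝ => fun i => (S i * X).trace))
    (F : Set (Matrix (Fin n) (Fin n) ℝ))
    (hF : F = {X | X.PosSemidef ∧ ∀ i, (S i * X).trace = b i})
    (Fα : ℝ → Set (Matrix (Fin n) (Fin n) ℝ))
    (hFα : ∀ α, Fα α = {X | X.PosSemidef ∧ ∀ i, (S i * X).trace = b i + α * (S i).trace})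
    (hne : F.Nonempty)
    (hbdd : ∃ M : ℝ, ∀ X ∈ F, ∀ i j, |X i j| ≤ M) :
    ∀ α : ℝ, 0 < α →
      ∃! X : Matrix (Fin n) (Fin n) ℝ,
        X ∈ Fα α ∧ X.PosDef ∧ ∀ Y ∈ Fα α, Y.det ≤ X.det := by
  classical
  intro α hα
  obtain ⟨X₀, hX₀⟩ := hne
  rw [hF] at hX₀
  obtain ⟨hX₀psd, hX₀c⟩ := hX₀
  obtain ⟨M, hM⟩ := hbdd
  have hX₀F : X₀ ∈ F := by rw [hF]; exact ⟨hX₀psd, hX₀c⟩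
  -- recession cone trivial
  have hrec : ∀ Z : Matrix (Fin n) (Fin n) ℝ, Z.PosSemidef →
      (∀ i, (S i * Z).trace = 0) → Z = 0 := by
    intro Z hZ hZc
    by_contra hZ0
    have htr : 0 < Z.trace := by
      rcases lt_or_eq_of_le (psd_trace_nonneg hZ) with h | h
      · exact h
      · exact absurd (psd_eq_zero_of_trace_eq_zero hZ h.symm) hZ0
    have hk' : ∃ k, 0 < Z k k := by
      by_contra h
      push_neg at h
      have : Z.trace ≤ 0 := Finset.sum_nonpos fun k _ => h k
      linarith
    obtain ⟨k, hk⟩ := hk'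
    set t := (2*M + 1)/(Z k k) with htdef
    have hMnn' : 0 ≤ M := le_trans (abs_nonneg _) (hM X₀ hX₀F k k)
    have ht : 0 ≤ t := div_nonneg (by linarith) (le_of_lt hk)
    have hmem : X₀ + t • Z ∈ F := by
      rw [hF]
      refine ⟨hX₀psd.add (psd_smul hZ ht), fun i => ?_⟩
      rw [Matrix.mul_add, trace_add, hX₀c i, Matrix.mul_smul, trace_smul, hZc i]
      simp
    have hb1 := (abs_le.mp (hM _ hmem k k)).2
    have he : (X₀ + t • Z) k k = X₀ k k + t * Z k k := by
      simp [Matrix.add_apply]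
    have ht2 : t * Z k k = 2*M + 1 := div_mul_cancel₀ _ (ne_of_gt hk)
    have hx0 : -M ≤ X₀ k k := neg_le_of_abs_le (hM X₀ hX₀F k k)
    rw [he, ht2] at hb1
    linarith
  -- boundedness of Fα α
  have hcex : ∃ c : ℝ, ∀ X ∈ Fα α, ∀ i j : Fin n, |X i j| ≤ c := by
    rcases Nat.eq_zero_or_pos n with hn | hn
    · exact ⟨0, fun X _ i j => absurd i.isLt (by omega)⟩
    · set D : Set (Matrix (Fin n) (Fin n) ℝ) := {Z | Z.PosSemidef ∧ Z.trace = 1} with hDdef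
      have hDclosed : IsClosed D := by
        have : D = {Z : Matrix (Fin n) (Fin n) ℝ | Z.PosSemidef} ∩
            {Z : Matrix (Fin n) (Fin n) ℝ | Z.trace = 1} := rfl
        rw [this]
        exact isClosed_psd.inter (isClosed_eq (continuous_id.matrix_trace) continuous_const)
      have hDb : ∀ Z ∈ D, ∀ i j : Fin n, |Z i j| ≤ 1 := by
        intro Z hZ i j
        have := psd_abs_le_trace hZ.1 i j
        rwa [hZ.2] at this
      have hDcomp := isCompact_of_bounded_closed hDclosed hDb
      have hnne : (0:ℝ) < (n:ℝ) := by exact_mod_cast hn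
      have hDne : D.Nonempty := by
        refine ⟨(n:ℝ)⁻¹ • 1, psd_smul Matrix.PosSemidef.one (inv_nonneg.mpr hnne.le), ?_⟩
        rw [trace_smul, trace_one]
        simp
        field_simp
      set g : Matrix (Fin n) (Fin n) ℝ → ℝ := fun Z => ∑ i, ((S i * Z).trace)^2 with hgdef
      have hgcont : Continuous g := by
        apply continuous_finset_sum
        intro i _
        exact ((continuous_const.matrix_mul continuous_id).matrix_trace).pow 2
      obtain ⟨Z₀, hZ₀D, hZ₀min⟩ := hDcomp.exists_isMinOn hDne hgcont.continuousOn
      have hgnn : ∀ Z, 0 ≤ g Z := fun Z => Finset.sum_nonneg fun i _ => sq_nonneg _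
      have hε : 0 < g Z₀ := by
        rcases lt_or_eq_of_le (hgnn Z₀) with h | h
        · exact h
        · exfalso
          have hzero : ∀ i, (S i * Z₀).trace = 0 := by
            intro i
            have := (Finset.sum_eq_zero_iff_of_nonneg
              (fun i _ => sq_nonneg ((S i * Z₀).trace))).mp h.symm i (Finset.mem_univ i)
            exact pow_eq_zero_iff (by norm_num) |>.mp this
          have := hrec Z₀ hZ₀D.1 hzero
          rw [this] at hZ₀D
          simpa using hZ₀D.2
      set c2 : ℝ := ∑ i, (b i + α * (S i).trace)^2 with hc2def
      have hc2nn : 0 ≤ c2 := Finset.sum_nonneg fun i _ => sq_nonneg _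
      refine ⟨Real.sqrt (c2 / g Z₀), fun X hX i j => ?_⟩
      rw [hFα] at hX
      have hXpsd := hX.1
      have htrX : X.trace ≤ Real.sqrt (c2 / g Z₀) := by
        rcases lt_or_eq_of_le (psd_trace_nonneg hXpsd) with h0 | h0
        · set Z := (X.trace)⁻¹ • X with hZdef
          have hZD : Z ∈ D := by
            refine ⟨psd_smul hXpsd (inv_nonneg.mpr h0.le), ?_⟩
            rw [hZdef, trace_smul]
            simp
            field_simp
          have hgZ : g Z₀ ≤ g Z := hZ₀min hZD
          have hgZval : g Z = (X.trace)⁻¹^2 * c2 := by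
            rw [hgdef, hc2def]
            simp only [hZdef, Matrix.mul_smul, trace_smul, smul_eq_mul, mul_pow,
              Finset.mul_sum]
            exact Finset.sum_congr rfl fun i _ => by rw [hX.2 i]
          have h1 : X.trace^2 * g Z₀ ≤ c2 := by
            rw [hgZval] at hgZ
            have h2 := mul_le_mul_of_nonneg_left hgZ (sq_nonneg X.trace)
            have h3 : X.trace^2 * ((X.trace)⁻¹^2 * c2) = c2 := by
              field_simp
            linarith [h2, h3.symm.le, h3.le]
          have h4 : X.trace^2 ≤ c2 / g Z₀ := (le_div_iff₀ hε).mpr h1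
          have h5 := Real.sqrt_le_sqrt h4
          rwa [Real.sqrt_sq h0.le] at h5
        · rw [← h0]
          exact Real.sqrt_nonneg _
      exact le_trans (psd_abs_le_trace hXpsd i j) htrX
  obtain ⟨c, hc⟩ := hcex
  -- compactness of Fα α
  have hclosed : IsClosed (Fα α) := by
    rw [hFα]
    have : {X : Matrix (Fin n) (Fin n) ℝ |
        X.PosSemidef ∧ ∀ i, (S i * X).trace = b i + α * (S i).trace}
        = {X : Matrix (Fin n) (Fin n) ℝ | X.PosSemidef} ∩
          ⋂ i, {X : Matrix (Fin n) (Fin n) ℝ | (S i * X).trace = b i + α * (S i).trace} := by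
      ext X
      simp [Set.mem_iInter]
    rw [this]
    exact isClosed_psd.inter (isClosed_iInter fun i => isClosed_constraint _ _)
  have hcomp := isCompact_of_bounded_closed hclosed hc
  -- the perturbed point
  have hWmem : X₀ + α • 1 ∈ Fα α := by
    rw [hFα]
    refine ⟨hX₀psd.add (psd_smul Matrix.PosSemidef.one hα.le), fun i => ?_⟩
    rw [Matrix.mul_add, trace_add, hX₀c i, Matrix.mul_smul, Matrix.mul_one, trace_smul]
    simp
  have hWpd : (X₀ + α • 1).PosDef := by
    refine Matrix.PosDef.posSemidef_add hX₀psd ?_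
    rw [smul_one_eq_diagonal]
    exact posDef_diagonal_iff.mpr fun i => hα
  -- maximize det
  obtain ⟨Xm, hXmF, hXmmax⟩ := hcomp.exists_isMaxOn ⟨_, hWmem⟩
    (continuous_id.matrix_det.continuousOn)
  have hdXm : 0 < Xm.det := lt_of_lt_of_le hWpd.det_pos (hXmmax hWmem)
  have hXmpsd : Xm.PosSemidef := by
    rw [hFα] at hXmF
    exact hXmF.1
  have hXmpd : Xm.PosDef := posdef_of_det_pos hXmpsd hdXm
  refine ⟨Xm, ⟨hXmF, hXmpd, fun Y hY => hXmmax hY⟩, ?_⟩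
  intro Y hYprop
  obtain ⟨hYF, hYpd, hYmax⟩ := hYprop
  have hdeq : Xm.det = Y.det := le_antisymm (hYmax Xm hXmF) (hXmmax hYF)
  have hmidmem : (1/2 : ℝ) • (Xm + Y) ∈ Fα α := by
    rw [hFα] at hXmF hYF ⊢
    refine ⟨psd_smul (hXmF.1.add hYF.1) (by norm_num), fun i => ?_⟩
    rw [Matrix.mul_smul, trace_smul, Matrix.mul_add, trace_add, hXmF.2 i, hYF.2 i]
    simp
    ring
  have hmidle : ((1/2:ℝ) • (Xm + Y)).det ≤ Xm.det := hXmmax hmidmem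
  exact unique_max hXmpd hYpd hdeq hmidle
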